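/- Let G be a connected graph, x an eigenvector for the smallest adjacency eigenvalue μ_min(G), V₁ = {u : x_u < 0}, and H the spanning subgraph of G consisting of all edges with exactly one endpoint in V₁. Then μ_min(H) ≤ μ_min(G), and H is bipartite so μ_min(H) = −μ(H). -/

import Mathlib

open Classical in
noncomputable def adjMat {V : Type*} [Fintype V] (G : SimpleGraph V) :
    Matrix V V ℝ :=
  Matrix.of fun i j => if G.Adj i j then 1 else 0

def IsAdjEigenvalue {V : Type*} [Fintype V] (A : Matrix V V ℝ) (μ : ℝ) : Prop :=
  ∃ x : V → ℝ, x ≠ 0 ∧ A.mulVec x = μ • x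

def IsMaxAdjEigenvalue {V : Type*} [Fintype V] (A : Matrix V V ℝ) (μ : ℝ) : Prop :=
  IsAdjEigenvalue A μ ∧ ∀ ν, IsAdjEigenvalue A ν → ν ≤ μ

def IsMinAdjEigenvalue {V : Type*} [Fintype V] (A : Matrix V V ℝ) (μ : ℝ) : Prop :=
  IsAdjEigenvalue A μ ∧ ∀ ν, IsAdjEigenvalue A ν → μ ≤ ν

/-- The spanning subgraph of `G` keeping exactly the edges with one endpoint
where `x` is negative and the other where `x` is nonnegative. -/
def crossSub {n : ℕ} (G : SimpleGraph (Fin n)) (x : Fin n → ℝ) : SimpleGraph (Fin n) where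
  Adj a b := G.Adj a b ∧ ¬ ((x a < 0) ↔ (x b < 0))
  symm := by
    constructor
    intro a b h
    exact ⟨h.1.symm, fun hi => h.2 hi.symm⟩
  loopless := by
    constructor
    intro a h
    exact G.irrefl h.1

open Matrix

lemma adjMat_isHermitian {n : ℕ} (G : SimpleGraph (Fin n)) : (adjMat G).IsHermitian := by
  ext i j
  simp only [adjMat, Matrix.conjTranspose_apply, Matrix.of_apply, star_trivial]
  rw [G.adj_comm]

lemma eigenvalues_isAdjEigenvalue {n : ℕ} (A : Matrix (Fin n) (Fin n) ℝ)
    (hA : A.IsHermitian) (i : Fin n) : IsAdjEigenvalue A (hA.eigenvalues i) := by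
  refine ⟨⇑(hA.eigenvectorBasis i), ?_, hA.mulVec_eigenvectorBasis i⟩
  have h0 := hA.eigenvectorBasis.orthonormal.ne_zero i
  intro h
  apply h0
  ext k
  exact congrFun h k

lemma rayleigh_min {n : ℕ} (A : Matrix (Fin n) (Fin n) ℝ) (hA : A.IsHermitian) (ν : ℝ)
    (hν : ∀ μ, IsAdjEigenvalue A μ → ν ≤ μ) (y : Fin n → ℝ) :
    ν * (y ⬝ᵥ y) ≤ y ⬝ᵥ (A *ᵥ y) := by
  classical
  set B : Matrix (Fin n) (Fin n) ℝ := A - ν • (1 : Matrix (Fin n) (Fin n) ℝ) with hBdef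
  have hB : B.IsHermitian := by
    unfold Matrix.IsHermitian
    rw [hBdef, Matrix.conjTranspose_sub, hA.eq, Matrix.conjTranspose_smul,
      Matrix.conjTranspose_one]
    simp
  have hBmul : ∀ v : Fin n → ℝ, B *ᵥ v = A *ᵥ v - ν • v := by
    intro v
    rw [hBdef, Matrix.sub_mulVec, Matrix.smul_mulVec, Matrix.one_mulVec]
  have heignn : ∀ i, 0 ≤ hB.eigenvalues i := by
    intro i
    obtain ⟨v, hv0, hv⟩ := eigenvalues_isAdjEigenvalue B hB i
    rw [hBmul] at hv
    have h2 : A *ᵥ v = (hB.eigenvalues i + ν) • v := by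
      rw [add_smul, ← hv]
      abel
    have := hν _ ⟨v, hv0, h2⟩
    linarith
  have hpsd : B.PosSemidef := hB.posSemidef_iff_eigenvalues_nonneg.mpr (fun i => heignn i)
  have h0 := hpsd.dotProduct_mulVec_nonneg y
  rw [hBmul, dotProduct_sub, dotProduct_smul] at h0
  simp only [star_trivial, smul_eq_mul] at h0
  linarith

theorem stmt10 {n : ℕ} (G : SimpleGraph (Fin n)) (hG : G.Connected)
    (ν : ℝ) (hmin : IsMinAdjEigenvalue (adjMat G) ν)
    (x : Fin n → ℝ) (hx : x ≠ 0) (heig : (adjMat G).mulVec x = ν • x)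
    (νH μH : ℝ) (hminH : IsMinAdjEigenvalue (adjMat (crossSub G x)) νH)
    (hmaxH : IsMaxAdjEigenvalue (adjMat (crossSub G x)) μH) :
    νH ≤ ν ∧ (crossSub G x).Colorable 2 ∧ νH = -μH := by
  classical
  set H := crossSub G x with hH
  have hAH : (adjMat H).IsHermitian := adjMat_isHermitian H
  -- Part 1 : νH ≤ ν
  have part1 : νH ≤ ν := by
    have hxx : 0 < x ⬝ᵥ x := by
      have h1 : 0 ≤ x ⬝ᵥ x := Finset.sum_nonneg fun i _ => mul_self_nonneg (x i)
      rcases h1.lt_or_eq with h | h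
      · exact h
      · exact absurd (dotProduct_self_eq_zero.mp h.symm) hx
    have hlow : νH * (x ⬝ᵥ x) ≤ x ⬝ᵥ ((adjMat H) *ᵥ x) := rayleigh_min _ hAH _ hminH.2 x
    have hcut : x ⬝ᵥ ((adjMat H) *ᵥ x) ≤ x ⬝ᵥ ((adjMat G) *ᵥ x) := by
      simp only [dotProduct, Matrix.mulVec, dotProduct, Finset.mul_sum]
      refine Finset.sum_le_sum fun i _ => Finset.sum_le_sum fun j _ => ?_
      by_cases hadj : H.Adj i j
      · have hg : G.Adj i j := hadj.1
        simp [adjMat, hadj, hg]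
      · simp only [adjMat, Matrix.of_apply, hadj, if_false, mul_zero, zero_mul]
        by_cases hg : G.Adj i j
        · have hiff : (x i < 0) ↔ (x j < 0) := by
            by_contra hn
            exact hadj ⟨hg, hn⟩
          have : 0 ≤ x i * x j := by
            by_cases hneg : x i < 0
            · have := hiff.mp hneg
              nlinarith
            · have hj : ¬ x j < 0 := fun h => hneg (hiff.mpr h)
              push_neg at hneg hj
              nlinarith
          simp [hg]
          nlinarith
        · simp [hg]
    have : νH * (x ⬝ᵥ x) ≤ ν * (x ⬝ᵥ x) := by
      have hRay : x ⬝ᵥ ((adjMat G) *ᵥ x) = ν * (x ⬝ᵥ x) := by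
        rw [heig, dotProduct_smul, smul_eq_mul]
      linarith
    exact le_of_mul_le_mul_right (by simpa [mul_comm] using this) hxx
  -- Part 2 : bipartite
  have part2 : H.Colorable 2 := by
    refine ⟨SimpleGraph.Coloring.mk (fun v => if x v < 0 then 0 else 1) ?_⟩
    intro a b hab
    have h := hab.2
    by_cases ha : x a < 0 <;> by_cases hb2 : x b < 0
    · exact absurd ⟨fun _ => hb2, fun _ => ha⟩ h
    · simp [ha, hb2]
    · simp [ha, hb2]
    · exact absurd ⟨fun h' => absurd h' ha, fun h' => absurd h' hb2⟩ h
  -- Part 3 : νH = -μH   (spectrum symmetric under sign flip)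
  have flip : ∀ μ : ℝ, IsAdjEigenvalue (adjMat H) μ → IsAdjEigenvalue (adjMat H) (-μ) := by
    rintro μ ⟨y, hy0, hy⟩
    set D : Fin n → ℝ := fun v => if x v < 0 then -1 else 1 with hD
    refine ⟨fun v => D v * y v, ?_, ?_⟩
    · intro h
      apply hy0
      funext v
      have := congrFun h v
      simp only [Pi.zero_apply] at this ⊢
      by_cases hv : x v < 0 <;> simp [hD, hv] at this <;> simpa using this
    · funext i
      have hrow : ∀ j, adjMat H i j * (D j * y j) = adjMat H i j * (-(D i) * y j) := by
        intro j
        by_cases hadj : H.Adj i j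
        · have hDij : D j = -(D i) := by
            have hiff := hadj.2
            by_cases hi : x i < 0
            · have hj : ¬ x j < 0 := fun h => hiff ⟨fun _ => h, fun _ => hi⟩
              simp [hD, hi, hj]
            · have hj : x j < 0 := by
                by_contra hj
                exact hiff ⟨fun h => absurd h hi, fun h => absurd h hj⟩
              simp [hD, hi, hj]
          rw [hDij]
        · simp [adjMat, hadj]
      have hyi := congrFun hy i
      simp only [Matrix.mulVec, dotProduct, Pi.smul_apply, smul_eq_mul] at hyi ⊢
      calc ∑ j, adjMat H i j * (D j * y j)
          = ∑ j, adjMat H i j * (-(D i) * y j) := Finset.sum_congr rfl fun j _ => hrow j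
        _ = -(D i) * ∑ j, adjMat H i j * y j := by
            rw [Finset.mul_sum]
            exact Finset.sum_congr rfl fun j _ => by ring
        _ = -(D i) * (μ * y i) := by rw [hyi]
        _ = -μ * (D i * y i) := by ring
  have part3 : νH = -μH := by
    have h1 : νH ≤ -μH := hminH.2 _ (flip _ hmaxH.1)
    have h2 : -νH ≤ μH := hmaxH.2 _ (flip _ hminH.1)
    linarith
  exact ⟨part1, part2, part3⟩
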